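/- arXiv:2207.06295 — 2 statements merged into one kernel-verified Lean document; each statement's English description precedes it below -/
import Mathlib

section
/- Let ψ ∈ ℂ³⊗ℂ³ be the spin-0 singlet state of two spin-1 particles, ψ = (|1,-1⟩ − |0,0⟩ + |-1,1⟩)/√3 in the S_z product eigenbasis. Then for every unit vector w, the observables S_w²⊗I and I⊗S_w² are perfectly correlated on ψ: ψ lies in the kernel of (S_w²⊗I − I⊗S_w²). -/
set_option maxHeartbeats 1000000


noncomputable section
open Matrix

/-- The standard spin-1 matrix `S_x` on `ℂ³`. -/
def Sx : Matrix (Fin 3) (Fin 3) ℂ :=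
  ((Real.sqrt 2 : ℂ))⁻¹ • !![0, 1, 0; 1, 0, 1; 0, 1, 0]

/-- The standard spin-1 matrix `S_y` on `ℂ³`. -/
def Sy : Matrix (Fin 3) (Fin 3) ℂ :=
  ((Real.sqrt 2 : ℂ))⁻¹ • !![0, -Complex.I, 0; Complex.I, 0, -Complex.I; 0, Complex.I, 0]

/-- The standard spin-1 matrix `S_z = diag(1,0,-1)` on `ℂ³`. -/
def Sz : Matrix (Fin 3) (Fin 3) ℂ := !![1, 0, 0; 0, 0, 0; 0, 0, -1]

/-- Vectors in `ℝ³`. -/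
abbrev V3 := Fin 3 → ℝ

/-- The Euclidean inner product on `ℝ³`. -/
def dot3 (x y : V3) : ℝ := x 0 * y 0 + x 1 * y 1 + x 2 * y 2

/-- The spin component operator `S_w = w₁S_x + w₂S_y + w₃S_z` in direction `w`. -/
def Sdir (w : V3) : Matrix (Fin 3) (Fin 3) ℂ :=
  (w 0 : ℂ) • Sx + (w 1 : ℂ) • Sy + (w 2 : ℂ) • Sz

open TensorProduct

/-- The `S_z` eigenbasis of `ℂ³`: `ket 0 = |1⟩`, `ket 1 = |0⟩`, `ket 2 = |-1⟩`. -/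
def ket (i : Fin 3) : Fin 3 → ℂ := Pi.single i 1

/-- The spin-0 singlet state of two spin-1 particles,
`ψ = (|1,-1⟩ − |0,0⟩ + |-1,1⟩)/√3`. -/
def singlet : (Fin 3 → ℂ) ⊗[ℂ] (Fin 3 → ℂ) :=
  ((Real.sqrt 3 : ℂ))⁻¹ • (ket 0 ⊗ₜ ket 2 - ket 1 ⊗ₜ ket 1 + ket 2 ⊗ₜ ket 0)

/-- Explicit matrix form of `Sdir w`. -/
lemma Sdir_eq (w : V3) : Sdir w =
    !![(w 2 : ℂ), ((Real.sqrt 2 : ℂ))⁻¹ * ((w 0 : ℂ) - Complex.I * (w 1 : ℂ)), 0;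
       ((Real.sqrt 2 : ℂ))⁻¹ * ((w 0 : ℂ) + Complex.I * (w 1 : ℂ)), 0,
         ((Real.sqrt 2 : ℂ))⁻¹ * ((w 0 : ℂ) - Complex.I * (w 1 : ℂ));
       0, ((Real.sqrt 2 : ℂ))⁻¹ * ((w 0 : ℂ) + Complex.I * (w 1 : ℂ)), -(w 2 : ℂ)] := by
  ext i j
  fin_cases i <;> fin_cases j <;>
    simp [Sdir, Sx, Sy, Sz, Matrix.vecHead, Matrix.vecTail] <;> ring

/-- **TWIN correlations.** For every unit direction `w`, the singlet state lies in the
kernel of `S_w² ⊗ I − I ⊗ S_w²`: measurements of the squared spin component in the same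
direction on the two particles always agree. -/
theorem singlet_twin_correlation (w : V3) (hw : dot3 w w = 1) :
    ((TensorProduct.map (Sdir w ^ 2).mulVecLin LinearMap.id -
      TensorProduct.map LinearMap.id (Sdir w ^ 2).mulVecLin :
      (Fin 3 → ℂ) ⊗[ℂ] (Fin 3 → ℂ) →ₗ[ℂ] (Fin 3 → ℂ) ⊗[ℂ] (Fin 3 → ℂ))) singlet = 0 := by
  refine ((Pi.basisFun ℂ (Fin 3)).tensorProduct (Pi.basisFun ℂ (Fin 3))).ext_elem ?_
  rintro ⟨i, j⟩
  simp only [singlet, map_sub, map_add, _root_.map_smul, LinearMap.sub_apply,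
    TensorProduct.map_tmul, LinearMap.id_apply, map_zero, Finsupp.zero_apply,
    Finsupp.coe_smul, Finsupp.coe_sub, Finsupp.coe_add, Pi.smul_apply, Pi.sub_apply,
    Pi.add_apply, Module.Basis.tensorProduct_repr_tmul_apply, Pi.basisFun_repr,
    Matrix.mulVecLin_apply, ket, Matrix.mulVec_single]
  rw [pow_two, Sdir_eq, Matrix.mul_fin_three]
  fin_cases i <;> fin_cases j <;>
    simp only [Matrix.of_apply, Matrix.cons_val', Matrix.cons_val_zero, Matrix.cons_val_one,
      Matrix.head_cons, Matrix.cons_val_two, Matrix.tail_cons, Matrix.empty_val',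
      Matrix.cons_val_fin_one, Matrix.head_fin_const, Pi.single_apply, Fin.isValue,
      Fin.ext_iff] <;>
    simp [Fin.ext_iff, Matrix.vecHead, Matrix.vecTail] <;> ring
end
end

section
/- There is no function f : S² → {0,1}, constant on antipodal pairs, such that any two orthogonal unit vectors x ⊥ y never satisfy f(x) = f(y) = 0 while every orthonormal triple contains at least one vector with value 0. -/
set_option maxHeartbeats 1000000

noncomputable section

/-- `x` is a unit vector. -/
def UnitVec3 (x : V3) : Prop := dot3 x x = 1

/-- `x` and `y` are orthogonal. -/
def Orth3 (x y : V3) : Prop := dot3 x y = 0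

namespace KSaux
def N (x : V3) : V3 := (Real.sqrt (dot3 x x))⁻¹ • x
lemma dot3_smul_left (c : ℝ) (x y : V3) : dot3 (c • x) y = c * dot3 x y := by
  simp [dot3, Pi.smul_apply, smul_eq_mul]; ring
lemma dot3_smul_right (c : ℝ) (x y : V3) : dot3 x (c • y) = c * dot3 x y := by
  simp [dot3, Pi.smul_apply, smul_eq_mul]; ring
lemma unit_N (x : V3) (h : 0 < dot3 x x) : UnitVec3 (N x) := by
  unfold UnitVec3 N
  rw [dot3_smul_left, dot3_smul_right]
  have hs : 0 < Real.sqrt (dot3 x x) := Real.sqrt_pos.mpr h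
  have hm := Real.mul_self_sqrt h.le
  field_simp
  rw [Real.sq_sqrt h.le]
lemma N_unit (x : V3) (h : dot3 x x = 1) : N x = x := by
  unfold N; rw [h]; simp
lemma orth_N (x y : V3) (h : dot3 x y = 0) : Orth3 (N x) (N y) := by
  unfold Orth3 N; rw [dot3_smul_left, dot3_smul_right, h]; ring
lemma fin2 (x : Fin 2) (h : ¬ x = 0) : x = 1 := by omega
lemma dot_frame (u v w : V3) (huu : dot3 u u = 1) (hvv : dot3 v v = 1) (hww : dot3 w w = 1)
    (huv : dot3 u v = 0) (huw : dot3 u w = 0) (hvw : dot3 v w = 0)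
    (a b c a' b' c' : ℝ) :
    dot3 (a•u + b•v + c•w) (a'•u + b'•v + c'•w) = a*a' + b*b' + c*c' := by
  simp only [dot3, Pi.add_apply, Pi.smul_apply, smul_eq_mul] at *
  linear_combination (a*a')*huu + (b*b')*hvv + (c*c')*hww + (a*b'+a'*b)*huv +
    (a*c'+a'*c)*huw + (b*c'+b'*c)*hvw

/-- The Kochen–Specker gadget: a `0` propagates to any point at angle `θ`
with `tan θ = t`, provided `t^2 (1+γ^2)^2 = γ^2 (1-γ^2)` has a solution `γ ≠ 0`. -/
lemma gadget (f : V3 → Fin 2)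
    (P2 : ∀ x y : V3, 0 < dot3 x x → 0 < dot3 y y → dot3 x y = 0 →
      ¬ (f (N x) = 0 ∧ f (N y) = 0))
    (P3 : ∀ x y z : V3, 0 < dot3 x x → 0 < dot3 y y → 0 < dot3 z z →
      dot3 x y = 0 → dot3 x z = 0 → dot3 y z = 0 →
      f (N x) = 0 ∨ f (N y) = 0 ∨ f (N z) = 0)
    (u v w : V3) (huu : dot3 u u = 1) (hvv : dot3 v v = 1) (hww : dot3 w w = 1)
    (huv : dot3 u v = 0) (huw : dot3 u w = 0) (hvw : dot3 v w = 0)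
    (t γ α β : ℝ) (ht : t ≠ 0) (hγ : γ ≠ 0)
    (hrel : t^2*(1+γ^2)^2 = γ^2*(1-γ^2))
    (hαβ : α^2 + β^2 = 1) (hβ : β = t*α)
    (h0 : f u = 0) :
    f (α•u + β•v + (0:ℝ)•w) = 0 := by
  have dotc : ∀ a b c a' b' c' : ℝ,
      dot3 (a•u + b•v + c•w) (a'•u + b'•v + c'•w) = a*a' + b*b' + c*c' :=
    fun a b c a' b' c' => dot_frame u v w huu hvv hww huv huw hvw a b c a' b' c'
  have ht2 : 0 < t^2 := by positivity
  have hγ2 : 0 < γ^2 := by positivity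
  set A : V3 := (1:ℝ)•u + (0:ℝ)•v + (0:ℝ)•w with hA
  set Q : V3 := α•u + β•v + (0:ℝ)•w with hQ
  set C : V3 := (0:ℝ)•u + (0:ℝ)•v + (1:ℝ)•w with hC
  set D : V3 := t•u + (-1:ℝ)•v + (0:ℝ)•w with hD
  set U1 : V3 := (0:ℝ)•u + (1:ℝ)•v + γ•w with hU1
  set V1 : V3 := γ•u + (t*γ)•v + (-t)•w with hV1
  set W1 : V3 := (-(t*(1+γ^2)))•u + (γ^2)•v + (-γ)•w with hW1
  set U2 : V3 := (0:ℝ)•u + (1:ℝ)•v + (-γ)•w with hU2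
  set V2 : V3 := γ•u + (t*γ)•v + t•w with hV2
  set W2 : V3 := (t*(1+γ^2))•u + (-(γ^2))•v + (-γ)•w with hW2
  have hAu : A = u := by rw [hA]; module
  -- self-dots
  have dAA : 0 < dot3 A A := by rw [hA, dotc]; norm_num
  have dQQ1 : dot3 Q Q = 1 := by rw [hQ, dotc]; linarith [hαβ]
  have dQQ : 0 < dot3 Q Q := by rw [dQQ1]; norm_num
  have dCC : 0 < dot3 C C := by rw [hC, dotc]; norm_num
  have dDD : 0 < dot3 D D := by rw [hD, dotc]; nlinarith
  have dU1 : 0 < dot3 U1 U1 := by rw [hU1, dotc]; nlinarith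
  have dV1 : 0 < dot3 V1 V1 := by rw [hV1, dotc]; nlinarith
  have dW1 : 0 < dot3 W1 W1 := by rw [hW1, dotc]; nlinarith
  have dU2 : 0 < dot3 U2 U2 := by rw [hU2, dotc]; nlinarith
  have dV2 : 0 < dot3 V2 V2 := by rw [hV2, dotc]; nlinarith
  have dW2 : 0 < dot3 W2 W2 := by rw [hW2, dotc]; nlinarith
  have hNA : N A = u := by rw [hAu]; exact N_unit u huu
  have hNQ : N Q = Q := N_unit Q dQQ1
  -- start the deduction
  by_contra hq0
  have hq1 : f Q = 1 := fin2 _ hq0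
  -- C is orthogonal to A, so f (N C) = 1
  have hC1 : f (N C) = 1 := by
    refine fin2 _ fun hc => P2 A C dAA dCC ?_ ⟨by rw [hNA]; exact h0, hc⟩
    rw [hA, hC, dotc]; ring
  -- triple Q, C, D forces f (N D) = 0
  have hD0 : f (N D) = 0 := by
    rcases P3 Q C D dQQ dCC dDD (by rw [hQ, hC, dotc]; ring)
      (by rw [hQ, hD, dotc]; linear_combination -hβ) 
      (by rw [hC, hD, dotc]; ring) with h | h | h
    · rw [hNQ, hq1] at h; exact absurd h (by decide)
    · rw [hC1] at h; exact absurd h (by decide)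
    · exact h
  -- U1 ⊥ A : f (N U1) = 1 ; V1 ⊥ D : f (N V1) = 1
  have hU1' : f (N U1) = 1 := by
    refine fin2 _ fun hc => P2 A U1 dAA dU1 ?_ ⟨by rw [hNA]; exact h0, hc⟩
    rw [hA, hU1, dotc]; ring
  have hV1' : f (N V1) = 1 := by
    refine fin2 _ fun hc => P2 D V1 dDD dV1 ?_ ⟨hD0, hc⟩
    rw [hD, hV1, dotc]; ring
  have hW1' : f (N W1) = 0 := by
    rcases P3 U1 V1 W1 dU1 dV1 dW1 (by rw [hU1, hV1, dotc]; ring)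
      (by rw [hU1, hW1, dotc]; ring) (by rw [hV1, hW1, dotc]; ring) with h | h | h
    · rw [hU1'] at h; exact absurd h (by decide)
    · rw [hV1'] at h; exact absurd h (by decide)
    · exact h
  have hU2' : f (N U2) = 1 := by
    refine fin2 _ fun hc => P2 A U2 dAA dU2 ?_ ⟨by rw [hNA]; exact h0, hc⟩
    rw [hA, hU2, dotc]; ring
  have hV2' : f (N V2) = 1 := by
    refine fin2 _ fun hc => P2 D V2 dDD dV2 ?_ ⟨hD0, hc⟩
    rw [hD, hV2, dotc]; ring
  have hW2' : f (N W2) = 0 := by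
    rcases P3 U2 V2 W2 dU2 dV2 dW2 (by rw [hU2, hV2, dotc]; ring)
      (by rw [hU2, hW2, dotc]; ring) (by rw [hV2, hW2, dotc]; ring) with h | h | h
    · rw [hU2'] at h; exact absurd h (by decide)
    · rw [hV2'] at h; exact absurd h (by decide)
    · exact h
  -- W1 ⊥ W2 : contradiction
  exact P2 W1 W2 dW1 dW2 (by rw [hW1, hW2, dotc]; linear_combination -hrel) ⟨hW1', hW2'⟩


/-- Chain of five gadget steps: a `0` at `u` propagates to the orthogonal `v`. -/
lemma chain (f : V3 → Fin 2)
    (P2 : ∀ x y : V3, 0 < dot3 x x → 0 < dot3 y y → dot3 x y = 0 →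
      ¬ (f (N x) = 0 ∧ f (N y) = 0))
    (P3 : ∀ x y z : V3, 0 < dot3 x x → 0 < dot3 y y → 0 < dot3 z z →
      dot3 x y = 0 → dot3 x z = 0 → dot3 y z = 0 →
      f (N x) = 0 ∨ f (N y) = 0 ∨ f (N z) = 0)
    (u v w : V3) (huu : dot3 u u = 1) (hvv : dot3 v v = 1) (hww : dot3 w w = 1)
    (huv : dot3 u v = 0) (huw : dot3 u w = 0) (hvw : dot3 v w = 0)
    (h0 : f u = 0) : f v = 0 := by
  have dotc : ∀ a b c a' b' c' : ℝ,
      dot3 (a•u + b•v + c•w) (a'•u + b'•v + c'•w) = a*a' + b*b' + c*c' :=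
    fun a b c a' b' c' => dot_frame u v w huu hvv hww huv huw hvw a b c a' b' c'
  have hcw : ∀ a b c : ℝ, dot3 (a•u + b•v + c•w) w = c := by
    intro a b c
    have h := dotc a b c 0 0 1
    simpa using h
  set r2 := Real.sqrt 2 with hr2def
  have h2 : r2^2 = 2 := Real.sq_sqrt (by norm_num)
  have hr2pos : 0 < r2 := Real.sqrt_pos.mpr (by norm_num)
  set r3 := Real.sqrt 3 with hr3def
  have h3 : r3^2 = 3 := Real.sq_sqrt (by norm_num)
  have hr3pos : 0 < r3 := Real.sqrt_pos.mpr (by norm_num)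
  have ht0 : (r2/4 : ℝ) ≠ 0 := by positivity
  have hγ0 : (r3/3 : ℝ) ≠ 0 := by positivity
  have hrel : (r2/4)^2*(1+(r3/3)^2)^2 = (r3/3)^2*(1-(r3/3)^2) := by
    linear_combination ((1+(r3/3)^2)^2/16)*h2 + ((r3^2-3)/72)*h3
  have hαβ : (2*r2/3)^2 + (1/3:ℝ)^2 = 1 := by linear_combination (4/9:ℝ)*h2
  have hβ : (1/3:ℝ) = (r2/4)*(2*r2/3) := by linear_combination (-(1:ℝ)/6)*h2
  -- the chain points
  set p1 : V3 := (2*r2/3)•u + (1/3:ℝ)•v + (0:ℝ)•w with hp1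
  set q1 : V3 := (-(1/3):ℝ)•u + (2*r2/3)•v + (0:ℝ)•w with hq1
  set p2 : V3 := (7/9:ℝ)•u + (4*r2/9)•v + (0:ℝ)•w with hp2
  set q2 : V3 := (-(4*r2/9))•u + (7/9:ℝ)•v + (0:ℝ)•w with hq2
  set p3 : V3 := (10*r2/27)•u + (23/27:ℝ)•v + (0:ℝ)•w with hp3
  set q3 : V3 := (-(23/27):ℝ)•u + (10*r2/27)•v + (0:ℝ)•w with hq3
  set p4 : V3 := (17/81:ℝ)•u + (56*r2/81)•v + (0:ℝ)•w with hp4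
  set q4 : V3 := (-(56*r2/81))•u + (17/81:ℝ)•v + (0:ℝ)•w with hq4
  -- step 1 : u → p1
  have s1 : f p1 = 0 := by
    have h := gadget f P2 P3 u v w huu hvv hww huv huw hvw
      (r2/4) (r3/3) (2*r2/3) (1/3) ht0 hγ0 hrel hαβ hβ h0
    exact h
  -- step 2 : p1 → p2
  have fr1p : dot3 p1 p1 = 1 := by rw [hp1, dotc]; linear_combination (4/9:ℝ)*h2
  have fr1q : dot3 q1 q1 = 1 := by rw [hq1, dotc]; linear_combination (4/9:ℝ)*h2
  have fr1pq : dot3 p1 q1 = 0 := by rw [hp1, hq1, dotc]; ring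
  have fr1pw : dot3 p1 w = 0 := by rw [hp1]; simpa using hcw (2*r2/3) (1/3) 0
  have fr1qw : dot3 q1 w = 0 := by rw [hq1]; simpa using hcw (-(1/3)) (2*r2/3) 0
  have s2 : f p2 = 0 := by
    have h := gadget f P2 P3 p1 q1 w fr1p fr1q hww fr1pq fr1pw fr1qw
      (r2/4) (r3/3) (2*r2/3) (1/3) ht0 hγ0 hrel hαβ hβ s1
    have he : (2*r2/3)•p1 + (1/3:ℝ)•q1 + (0:ℝ)•w = p2 := by
      rw [hp1, hq1, hp2]; funext i
      simp only [Pi.add_apply, Pi.smul_apply, smul_eq_mul]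
      linear_combination ((4/9:ℝ)*(u i))*h2
    rwa [he] at h
  -- step 3 : p2 → p3
  have fr2p : dot3 p2 p2 = 1 := by rw [hp2, dotc]; linear_combination (16/81:ℝ)*h2
  have fr2q : dot3 q2 q2 = 1 := by rw [hq2, dotc]; linear_combination (16/81:ℝ)*h2
  have fr2pq : dot3 p2 q2 = 0 := by rw [hp2, hq2, dotc]; ring
  have fr2pw : dot3 p2 w = 0 := by rw [hp2]; simpa using hcw (7/9) (4*r2/9) 0
  have fr2qw : dot3 q2 w = 0 := by rw [hq2]; simpa using hcw (-(4*r2/9)) (7/9) 0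
  have s3 : f p3 = 0 := by
    have h := gadget f P2 P3 p2 q2 w fr2p fr2q hww fr2pq fr2pw fr2qw
      (r2/4) (r3/3) (2*r2/3) (1/3) ht0 hγ0 hrel hαβ hβ s2
    have he : (2*r2/3)•p2 + (1/3:ℝ)•q2 + (0:ℝ)•w = p3 := by
      rw [hp2, hq2, hp3]; funext i
      simp only [Pi.add_apply, Pi.smul_apply, smul_eq_mul]
      linear_combination ((8/27:ℝ)*(v i))*h2
    rwa [he] at h
  -- step 4 : p3 → p4
  have fr3p : dot3 p3 p3 = 1 := by rw [hp3, dotc]; linear_combination (100/729:ℝ)*h2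
  have fr3q : dot3 q3 q3 = 1 := by rw [hq3, dotc]; linear_combination (100/729:ℝ)*h2
  have fr3pq : dot3 p3 q3 = 0 := by rw [hp3, hq3, dotc]; ring
  have fr3pw : dot3 p3 w = 0 := by rw [hp3]; simpa using hcw (10*r2/27) (23/27) 0
  have fr3qw : dot3 q3 w = 0 := by rw [hq3]; simpa using hcw (-(23/27)) (10*r2/27) 0
  have s4 : f p4 = 0 := by
    have h := gadget f P2 P3 p3 q3 w fr3p fr3q hww fr3pq fr3pw fr3qw
      (r2/4) (r3/3) (2*r2/3) (1/3) ht0 hγ0 hrel hαβ hβ s3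
    have he : (2*r2/3)•p3 + (1/3:ℝ)•q3 + (0:ℝ)•w = p4 := by
      rw [hp3, hq3, hp4]; funext i
      simp only [Pi.add_apply, Pi.smul_apply, smul_eq_mul]
      linear_combination ((20/81:ℝ)*(u i))*h2
    rwa [he] at h
  -- step 5 : p4 → v
  have fr4p : dot3 p4 p4 = 1 := by rw [hp4, dotc]; linear_combination (3136/6561:ℝ)*h2
  have fr4q : dot3 q4 q4 = 1 := by rw [hq4, dotc]; linear_combination (3136/6561:ℝ)*h2
  have fr4pq : dot3 p4 q4 = 0 := by rw [hp4, hq4, dotc]; ring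
  have fr4pw : dot3 p4 w = 0 := by rw [hp4]; simpa using hcw (17/81) (56*r2/81) 0
  have fr4qw : dot3 q4 w = 0 := by rw [hq4]; simpa using hcw (-(56*r2/81)) (17/81) 0
  set q55 := Real.sqrt 55 with hq55def
  have h55 : q55^2 = 55 := Real.sq_sqrt (by norm_num)
  have hq8 : q55 < 8 := by
    rw [hq55def]
    exact (Real.sqrt_lt' (by norm_num)).mpr (by norm_num)
  have hs5pos : (0:ℝ) < (2847 - 336*q55)/6561 := by linarith
  set g5 := Real.sqrt ((2847 - 336*q55)/6561) with hg5def
  have hg5sq : g5^2 = (2847 - 336*q55)/6561 := Real.sq_sqrt hs5pos.le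
  have hg50 : g5 ≠ 0 := by
    rw [hg5def]; exact Real.sqrt_ne_zero'.mpr hs5pos
  have ht5 : (17*r2/112 : ℝ) ≠ 0 := by positivity
  have hrel5 : (17*r2/112)^2*(1+g5^2)^2 = g5^2*(1-g5^2) := by
    rw [hg5sq]
    linear_combination ((289/12544)*(1+(2847 - 336*q55)/6561)^2)*h2 + ((2:ℝ)/729)*h55
  have hαβ5 : (56*r2/81)^2 + (17/81:ℝ)^2 = 1 := by linear_combination (3136/6561:ℝ)*h2
  have hβ5 : (17/81:ℝ) = (17*r2/112)*(56*r2/81) := by linear_combination (-(17:ℝ)/162)*h2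
  have h := gadget f P2 P3 p4 q4 w fr4p fr4q hww fr4pq fr4pw fr4qw
    (17*r2/112) g5 (56*r2/81) (17/81) ht5 hg50 hrel5 hαβ5 hβ5 s4
  have he : (56*r2/81)•p4 + (17/81:ℝ)•q4 + (0:ℝ)•w = v := by
    rw [hp4, hq4]; funext i
    simp only [Pi.add_apply, Pi.smul_apply, smul_eq_mul]
    linear_combination ((3136/6561:ℝ)*(v i))*h2
  rwa [he] at h

end KSaux

open KSaux in
/-- **Kochen–Specker obstruction, reformulated.** There is no `{0,1}`-valued function on
the unit sphere, constant on antipodal pairs, such that no two orthogonal unit vectors both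
take the value `0` while every orthonormal triple contains at least one vector of value `0`. -/
theorem no_antipodal_ks_coloring :
    ¬ ∃ f : V3 → Fin 2,
      (∀ x : V3, UnitVec3 x → f (-x) = f x) ∧
      (∀ x y : V3, UnitVec3 x → UnitVec3 y → Orth3 x y → ¬ (f x = 0 ∧ f y = 0)) ∧
      (∀ x y z : V3, UnitVec3 x → UnitVec3 y → UnitVec3 z →
        Orth3 x y → Orth3 x z → Orth3 y z → (f x = 0 ∨ f y = 0 ∨ f z = 0)) := by
  rintro ⟨f, -, hpair, htrip⟩
  have P2 : ∀ x y : V3, 0 < dot3 x x → 0 < dot3 y y → dot3 x y = 0 →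
      ¬ (f (N x) = 0 ∧ f (N y) = 0) := fun x y hx hy hxy =>
    hpair (N x) (N y) (unit_N x hx) (unit_N y hy) (orth_N x y hxy)
  have P3 : ∀ x y z : V3, 0 < dot3 x x → 0 < dot3 y y → 0 < dot3 z z →
      dot3 x y = 0 → dot3 x z = 0 → dot3 y z = 0 →
      f (N x) = 0 ∨ f (N y) = 0 ∨ f (N z) = 0 := fun x y z hx hy hz hxy hxz hyz =>
    htrip (N x) (N y) (N z) (unit_N x hx) (unit_N y hy) (unit_N z hz)
      (orth_N x y hxy) (orth_N x z hxz) (orth_N y z hyz)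
  set E0 : V3 := ![1, 0, 0] with hE0
  set E1 : V3 := ![0, 1, 0] with hE1
  set E2 : V3 := ![0, 0, 1] with hE2
  have u00 : dot3 E0 E0 = 1 := by norm_num [dot3, hE0, Matrix.cons_val_two]
  have u11 : dot3 E1 E1 = 1 := by norm_num [dot3, hE1, Matrix.cons_val_two]
  have u22 : dot3 E2 E2 = 1 := by norm_num [dot3, hE2, Matrix.cons_val_two]
  have o01 : dot3 E0 E1 = 0 := by norm_num [dot3, hE0, hE1, Matrix.cons_val_two]
  have o02 : dot3 E0 E2 = 0 := by norm_num [dot3, hE0, hE2, Matrix.cons_val_two]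
  have o12 : dot3 E1 E2 = 0 := by norm_num [dot3, hE1, hE2, Matrix.cons_val_two]
  have o10 : dot3 E1 E0 = 0 := by norm_num [dot3, hE0, hE1, Matrix.cons_val_two]
  have o20 : dot3 E2 E0 = 0 := by norm_num [dot3, hE0, hE2, Matrix.cons_val_two]
  have o21 : dot3 E2 E1 = 0 := by norm_num [dot3, hE1, hE2, Matrix.cons_val_two]
  rcases htrip E0 E1 E2 u00 u11 u22 o01 o02 o12 with h | h | h
  · have h' := chain f P2 P3 E0 E1 E2 u00 u11 u22 o01 o02 o12 h
    exact hpair E0 E1 u00 u11 o01 ⟨h, h'⟩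
  · have h' := chain f P2 P3 E1 E2 E0 u11 u22 u00 o12 o10 o20 h
    exact hpair E1 E2 u11 u22 o12 ⟨h, h'⟩
  · have h' := chain f P2 P3 E2 E0 E1 u22 u00 u11 o20 o21 o01 h
    exact hpair E2 E0 u22 u00 o20 ⟨h, h'⟩
end
end
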